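/- For every n ≥ 1, n! · Σ_{T ∈ PT(n)} ∏_{v ∈ T} 1/h_v = (2n-3)!!, where PT(n) is the set of plane trees with n vertices and (2n-3)!! = (2n-3)(2n-5)···3·1 with (-1)!! = 1. -/

import Mathlib

/-- Plane trees: nonempty rooted trees whose subtrees at each vertex are linearly ordered. -/
inductive PTree : Type
  | node : List PTree → PTree

namespace PTree

mutual
/-- The number of vertices of a plane tree. -/
def size : PTree → ℕ
  | .node cs => sizeList cs + 1
/-- The total number of vertices of a plane forest (a list of plane trees). -/
def sizeList : List PTree → ℕ
  | [] => 0
  | t :: ts => size t + sizeList ts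
end

mutual
/-- The multiset of hook lengths of a plane tree: the hook length of a vertex
is the number of its descendants, counting the vertex itself. -/
def hooks : PTree → Multiset ℕ+
  | .node cs => ⟨sizeList cs + 1, Nat.succ_pos _⟩ ::ₘ hooksList cs
/-- The multiset of hook lengths of a plane forest. -/
def hooksList : List PTree → Multiset ℕ+
  | [] => 0
  | t :: ts => hooks t + hooksList ts
end

end PTree

namespace PTree

mutual
def decEq : (a b : PTree) → Decidable (a = b)
  | .node cs, .node ds =>
    match decEqList cs ds with
    | isTrue h => isTrue (by rw [h])
    | isFalse h => isFalse (by intro hh; injection hh; contradiction)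
def decEqList : (a b : List PTree) → Decidable (a = b)
  | [], [] => isTrue rfl
  | [], _ :: _ => isFalse (by simp)
  | _ :: _, [] => isFalse (by simp)
  | a :: as, b :: bs =>
    match decEq a b, decEqList as bs with
    | isTrue h1, isTrue h2 => isTrue (by rw [h1, h2])
    | isFalse h1, _ => isFalse (by simp [h1])
    | _, isFalse h2 => isFalse (by simp [h2])
end

instance : DecidableEq PTree := decEq

/-- The weight of a tree: product of reciprocal hook lengths. -/
def w (t : PTree) : ℚ := (t.hooks.map fun h => 1 / (h : ℚ)).prod

/-- The weight of a forest. -/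
def wL (ts : List PTree) : ℚ := ((hooksList ts).map fun h => 1 / (h : ℚ)).prod

@[simp] lemma wL_nil : wL [] = 1 := by simp [wL, hooksList]

@[simp] lemma wL_cons (t : PTree) (ts : List PTree) : wL (t :: ts) = w t * wL ts := by
  simp [wL, w, hooksList]

lemma w_cons_aux (a : ℕ+) (s : Multiset ℕ+) :
    ((a ::ₘ s).map fun h => 1 / (h : ℚ)).prod = 1 / (a : ℚ) * (s.map fun h => 1 / (h : ℚ)).prod := by
  simp [Multiset.cons_bind]

lemma w_node (cs : List PTree) :
    w (node cs) = (1 / ((sizeList cs : ℚ) + 1)) * wL cs := by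
  have := w_cons_aux ⟨sizeList cs + 1, Nat.succ_pos _⟩ (hooksList cs)
  simp only [PNat.mk_coe, Nat.cast_add, Nat.cast_one] at this
  exact this

lemma size_pos (t : PTree) : 1 ≤ t.size := by
  cases t with
  | node cs => simp [size]

/-- The finset of all plane forests with a given number of vertices. -/
def forests : ℕ → Finset (List PTree)
  | 0 => {[]}
  | m + 1 =>
    (Finset.range (m + 1)).attach.biUnion fun j =>
      (((forests j.1).image PTree.node) ×ˢ forests (m - j.1)).image fun p => p.1 :: p.2
  decreasing_by
    · exact Finset.mem_range.mp j.2
    · exact Nat.lt_succ_of_le (Nat.sub_le _ _)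

lemma mem_forests : ∀ (m : ℕ) (ts : List PTree), ts ∈ forests m ↔ sizeList ts = m := by
  intro m
  induction m using Nat.strong_induction_on with
  | _ m ih =>
    intro ts
    match m with
    | 0 =>
      rw [forests]
      constructor
      · intro h
        simp only [Finset.mem_singleton] at h
        subst h; rfl
      · intro h
        cases ts with
        | nil => simp
        | cons t ts' =>
          exfalso
          have := size_pos t
          simp [sizeList] at h
          omega
    | m + 1 =>
      rw [forests]
      simp only [Finset.mem_biUnion, Finset.mem_attach, true_and, Finset.mem_image,
        Finset.mem_product, Subtype.exists, Finset.mem_range]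
      constructor
      · rintro ⟨j, hj, ⟨⟨t, rest⟩, ⟨ht, hrest⟩, rfl⟩⟩
        simp only at ht hrest ⊢
        obtain ⟨cs, hcs, rfl⟩ := ht
        have h1 : sizeList cs = j := (ih j hj cs).mp hcs
        have h2 : sizeList rest = m - j := (ih (m - j) (Nat.lt_succ_of_le (Nat.sub_le _ _)) rest).mp hrest
        simp only [sizeList, size, h1, h2]
        omega
      · intro h
        cases ts with
        | nil => simp [sizeList] at h
        | cons t rest =>
          obtain ⟨cs⟩ := t
          simp only [sizeList, size] at h
          refine ⟨sizeList cs, by omega, ⟨(node cs, rest), ⟨?_, ?_⟩, rfl⟩⟩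
          · exact ⟨cs, (ih _ (by omega) cs).mpr rfl, rfl⟩
          · exact (ih _ (by omega) rest).mpr (by omega)

/-- Total weight of all forests of size `m`. -/
def b (m : ℕ) : ℚ := ∑ ts ∈ forests m, wL ts

@[simp] lemma b_zero : b 0 = 1 := by
  rw [b, forests]
  simp

lemma sum_node (j : ℕ) :
    ∑ cs ∈ forests j, w (node cs) = b j / (j + 1) := by
  rw [b, Finset.sum_div]
  apply Finset.sum_congr rfl
  intro cs hcs
  have h : sizeList cs = j := (mem_forests j cs).mp hcs
  rw [w_node, h]
  ring

lemma cons_inj_on (s : Finset (PTree × List PTree)) :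
    Set.InjOn (fun p : PTree × List PTree => p.1 :: p.2) s := by
  rintro ⟨a, as⟩ _ ⟨c, cs⟩ _ h
  simp only [List.cons.injEq] at h
  simp [h.1, h.2]

lemma b_succ (m : ℕ) :
    b (m + 1) = ∑ j ∈ Finset.range (m + 1), (b j / (j + 1)) * b (m - j) := by
  rw [b, forests]
  rw [Finset.sum_biUnion]
  · rw [← Finset.sum_attach (Finset.range (m + 1))
      (fun j => (b j / (j + 1)) * b (m - j))]
    apply Finset.sum_congr rfl
    intro j _
    rw [Finset.sum_image (fun p hp q hq h => cons_inj_on _ hp hq h)]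
    rw [Finset.sum_product]
    simp only [wL_cons]
    rw [← Finset.sum_mul_sum]
    rw [Finset.sum_image (fun a _ c _ h => node.injEq a c ▸ h), sum_node j.1]
    rfl
  · -- pairwise disjointness
    rintro ⟨j, hj⟩ - ⟨j', hj'⟩ - hne
    have hjj : j ≠ j' := fun h => hne (Subtype.ext h)
    simp only [Function.onFun]
    rw [Finset.disjoint_left]
    rintro ts hts hts'
    simp only [Finset.mem_image, Finset.mem_product] at hts hts'
    obtain ⟨⟨t, rest⟩, ⟨ht, -⟩, rfl⟩ := hts
    obtain ⟨⟨t', rest'⟩, ⟨ht', -⟩, heq⟩ := hts'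
    simp only [List.cons.injEq] at heq
    obtain ⟨rfl, rfl⟩ := heq
    obtain ⟨cs, hcs, rfl⟩ := ht
    obtain ⟨cs', hcs', hnode⟩ := ht'
    have : cs' = cs := by injection hnode
    subst this
    exact hjj (((mem_forests _ _).mp hcs).symm.trans ((mem_forests _ _).mp hcs'))

lemma cb_cat (k : ℕ) : (k + 2) * catalan (k + 1) = 2 * (2 * k + 1) * catalan k := by
  have h1 : (k + 2) * catalan (k + 1) = Nat.centralBinom (k + 1) :=
    succ_mul_catalan_eq_centralBinom (k + 1)
  have h2 := Nat.succ_mul_centralBinom_succ k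
  have h3 : (k + 1) * catalan k = Nat.centralBinom k := succ_mul_catalan_eq_centralBinom k
  have : (k + 1) * ((k + 2) * catalan (k + 1)) = (k + 1) * (2 * (2 * k + 1) * catalan k) := by
    rw [h1, h2, ← h3]; ring
  exact Nat.eq_of_mul_eq_mul_left (Nat.succ_pos k) this

/-- Key identity relating catalan numbers. -/
lemma key_identity (m : ℕ) :
    2 * ∑ j ∈ Finset.range (m + 1),
      (((m - j : ℕ) : ℚ) + 1) * catalan j * catalan (m - j)
    = ((m : ℚ) + 2) * catalan (m + 1) := by
  have hrefl : ∑ j ∈ Finset.range (m + 1),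
      (((m - j : ℕ) : ℚ) + 1) * catalan j * catalan (m - j)
      = ∑ j ∈ Finset.range (m + 1),
      ((j : ℚ) + 1) * catalan j * catalan (m - j) := by
    rw [← Finset.sum_range_reflect]
    apply Finset.sum_congr rfl
    intro j hj
    have hj' : j ≤ m := Nat.lt_succ_iff.mp (Finset.mem_range.mp hj)
    have h1 : m + 1 - 1 - j = m - j := by omega
    have h2 : m - (m - j) = j := by omega
    rw [h1, h2]
    ring
  have hcat : ((catalan (m + 1) : ℚ)) = ∑ j ∈ Finset.range (m + 1),
      (catalan j : ℚ) * catalan (m - j) := by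
    rw [catalan_succ' m, Finset.Nat.sum_antidiagonal_eq_sum_range_succ_mk]
    push_cast
    rfl
  calc 2 * ∑ j ∈ Finset.range (m + 1),
      (((m - j : ℕ) : ℚ) + 1) * catalan j * catalan (m - j)
      = (∑ j ∈ Finset.range (m + 1),
          (((m - j : ℕ) : ℚ) + 1) * catalan j * catalan (m - j))
        + ∑ j ∈ Finset.range (m + 1),
          ((j : ℚ) + 1) * catalan j * catalan (m - j) := by
        rw [← hrefl]; ring
    _ = ∑ j ∈ Finset.range (m + 1),
          ((m : ℚ) + 2) * (catalan j * catalan (m - j)) := by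
        rw [← Finset.sum_add_distrib]
        apply Finset.sum_congr rfl
        intro j hj
        have hj' : j ≤ m := Nat.lt_succ_iff.mp (Finset.mem_range.mp hj)
        have : ((m - j : ℕ) : ℚ) = (m : ℚ) - j := by
          have : ((m - j : ℕ) : ℚ) + (j : ℚ) = (m : ℚ) := by
            rw [← Nat.cast_add]; congr 1; omega
          linarith
        rw [this]
        ring
    _ = ((m : ℚ) + 2) * ∑ j ∈ Finset.range (m + 1),
          (catalan j : ℚ) * catalan (m - j) := by
        rw [Finset.mul_sum]
    _ = ((m : ℚ) + 2) * catalan (m + 1) := by rw [← hcat]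

lemma b_eq : ∀ m : ℕ, b m = ((m : ℚ) + 1) * catalan m / 2 ^ m := by
  intro m
  induction m using Nat.strong_induction_on with
  | _ m ih =>
    match m with
    | 0 => simp
    | m + 1 =>
      rw [b_succ]
      have hterm : ∀ j ∈ Finset.range (m + 1),
          (b j / (j + 1)) * b (m - j)
          = (1 / 2 ^ m) * ((((m - j : ℕ) : ℚ) + 1) * catalan j * catalan (m - j)) := by
        intro j hj
        have hj' : j ≤ m := Nat.lt_succ_iff.mp (Finset.mem_range.mp hj)
        rw [ih j (by omega), ih (m - j) (by omega)]
        have hj1 : ((j : ℚ) + 1) ≠ 0 := by positivity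
        have hpow : (2 : ℚ) ^ j * 2 ^ (m - j) = 2 ^ m := by
          rw [← pow_add]; congr 1; omega
        field_simp
        rw [← hpow]
        ring
      rw [Finset.sum_congr rfl hterm, ← Finset.mul_sum]
      have hkey := key_identity m
      have h2 : (2 : ℚ) ≠ 0 := two_ne_zero
      have hsum : ∑ j ∈ Finset.range (m + 1),
          (((m - j : ℕ) : ℚ) + 1) * catalan j * catalan (m - j)
          = ((m : ℚ) + 2) * catalan (m + 1) / 2 := by
        field_simp
        linarith [hkey]
      rw [hsum]
      push_cast
      field_simp
      ring

lemma two_pow_doubleFactorial : ∀ k : ℕ, 2 ^ k * (2 * k - 1).doubleFactorial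
    = (k + 1).factorial * catalan k := by
  intro k
  induction k with
  | zero => simp [Nat.doubleFactorial]
  | succ k ih =>
    have h1 : 2 * (k + 1) - 1 = 2 * k + 1 := by omega
    rw [h1]
    have h2 : (2 * k + 1).doubleFactorial = (2 * k + 1) * (2 * k - 1).doubleFactorial := by
      have := Nat.doubleFactorial_add_one (2 * k)
      simpa using this
    rw [h2]
    have h3 : (k + 2).factorial = (k + 2) * (k + 1).factorial := rfl
    calc 2 ^ (k + 1) * ((2 * k + 1) * (2 * k - 1).doubleFactorial)
        = 2 * (2 * k + 1) * (2 ^ k * (2 * k - 1).doubleFactorial) := by ring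
      _ = 2 * (2 * k + 1) * ((k + 1).factorial * catalan k) := by rw [ih]
      _ = (k + 1).factorial * (2 * (2 * k + 1) * catalan k) := by ring
      _ = (k + 1).factorial * ((k + 2) * catalan (k + 1)) := by rw [← cb_cat]
      _ = (k + 1 + 1).factorial * catalan (k + 1) := by rw [h3]; ring

end PTree

open PTree in
/-- The hook length formula for plane trees counting increasing plane trees. -/
theorem hook_formula_plane_trees (n : ℕ) (hn : 1 ≤ n) :
    (n.factorial : ℚ) *
      ∑ᶠ T : {t : PTree // t.size = n},
        ((T : PTree).hooks.map fun h => 1 / (h : ℚ)).prod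
    = (Nat.doubleFactorial (2 * n - 3) : ℚ) := by
  obtain ⟨k, rfl⟩ : ∃ k, n = k + 1 := ⟨n - 1, by omega⟩
  have hmem : ∀ t : PTree, t ∈ (forests k).image node ↔ t.size = k + 1 := by
    intro t
    cases t with
    | node cs =>
      simp only [Finset.mem_image, size]
      constructor
      · rintro ⟨cs', hcs', heq⟩
        have h : cs' = cs := by injection heq
        subst h
        rw [(mem_forests k cs').mp hcs']
      · intro h
        exact ⟨cs, (mem_forests k cs).mpr (by omega), rfl⟩
  haveI : Fintype {t : PTree // t.size = k + 1} := Fintype.subtype _ hmem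
  show ((k + 1).factorial : ℚ) * ∑ᶠ T : {t : PTree // t.size = k + 1}, w (T : PTree) = _
  rw [finsum_eq_sum_of_fintype]
  rw [← Finset.sum_subtype ((forests k).image node) hmem (fun t => w t)]
  rw [Finset.sum_image (fun a _ c _ h => node.injEq a c ▸ h), sum_node k, b_eq k]
  have hd : 2 * (k + 1) - 3 = 2 * k - 1 := by omega
  rw [hd]
  have hnat := two_pow_doubleFactorial k
  have hq : (2 : ℚ) ^ k * ((2 * k - 1).doubleFactorial : ℚ)
      = ((k + 1).factorial : ℚ) * catalan k := by
    exact_mod_cast congrArg (Nat.cast : ℕ → ℚ) hnat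
  have hk1 : ((k : ℚ) + 1) ≠ 0 := by positivity
  have hpow : (2 : ℚ) ^ k ≠ 0 := by positivity
  field_simp
  push_cast at hq ⊢
  linear_combination (-1 : ℚ) * hq
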